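/- Let G be a graph, A a set of vertices, and z a vertex such that G − z contains no even A-cycle. Let B be a block of G − z and let a ∈ A ∩ V(B). Then a has at most two neighbours in B. -/

import Mathlib

/-- The graph obtained from `G` by deleting the vertex `z` (here: removing all edges at `z`,
so cycles and blocks avoiding `z` are exactly those of `G - z`). -/
def deleteVertex {V : Type*} (G : SimpleGraph V) (z : V) : SimpleGraph V :=
  SimpleGraph.fromRel fun x y => G.Adj x y ∧ x ≠ z ∧ y ≠ z

/-- `B` is a block of `H`: a maximal vertex set inducing a connected subgraph
without a cutvertex. -/
def IsBlock {V : Type*} (H : SimpleGraph V) (B : Set V) : Prop :=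
  (H.induce B).Connected ∧ (∀ v ∈ B, (H.induce (B \ {v})).Preconnected) ∧
    ∀ B' : Set V, B ⊆ B' → (H.induce B').Connected →
      (∀ v ∈ B', (H.induce (B' \ {v})).Preconnected) → B = B'

open SimpleGraph Walk

section Aux

variable {V : Type*} {H : SimpleGraph V}

def inclHom (H : SimpleGraph V) (s : Set V) : H.induce s →g H := ⟨Subtype.val, fun h => h⟩

lemma inclHom_inj (s : Set V) : Function.Injective (inclHom H s) := Subtype.val_injective

example (s : Set V) (u v : s) (p : (H.induce s).Walk u v) (hp : p.IsPath) :
    ∃ q : H.Walk u v, q.IsPath ∧ ∀ x ∈ q.support, x ∈ s := by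
  refine ⟨p.map (inclHom H s), Walk.map_isPath_of_injective (inclHom_inj s) hp, ?_⟩
  intro x hx
  change x ∈ (p.map (inclHom H s)).support at hx
  rw [Walk.support_map] at hx
  obtain ⟨y, _, rfl⟩ := List.mem_map.mp hx
  exact y.2

lemma lemA {w : V} : ∀ {u v : V} (p : H.Walk u v) (q : H.Walk v w), p.IsPath →
    ∃ (t : V) (r : H.Walk u t), r.IsPath ∧ (∀ x ∈ r.support, x ∈ p.support) ∧
      t ∈ q.support ∧ ∀ x ∈ r.support, x ≠ t → x ∉ q.support := by
  intro u v p
  induction p with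
  | nil =>
    intro q _
    exact ⟨_, Walk.nil, Walk.IsPath.nil, by simp, q.start_mem_support, by simp⟩
  | cons h p' ih =>
    rename_i u' b c
    intro q hp
    by_cases hu : u' ∈ q.support
    · refine ⟨u', Walk.nil, Walk.IsPath.nil, by simp, hu, by simp⟩
    · obtain ⟨t, r', hr'path, hr'sub, htq, hr'q⟩ := ih q hp.of_cons
      refine ⟨t, Walk.cons h r', hr'path.cons ?_, ?_, htq, ?_⟩
      · intro hmem
        exact ((Walk.cons_isPath_iff _ _).mp hp).2 (hr'sub _ hmem)
      · intro x hx
        rw [Walk.support_cons, List.mem_cons] at hx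
        rw [Walk.support_cons]
        rcases hx with rfl | hx
        · exact List.mem_cons_self
        · exact List.mem_cons_of_mem _ (hr'sub _ hx)
      · intro x hx hxt
        rw [Walk.support_cons, List.mem_cons] at hx
        rcases hx with rfl | hx
        · exact hu
        · exact hr'q _ hx hxt

lemma lemC : ∀ {a t : V} (P : H.Walk a t), P.IsPath → s(a, t) ∈ P.edges → P.length = 1 := by
  intro a t P
  induction P with
  | nil => intro _ he; simp at he
  | cons h p' ih =>
    rename_i a b c
    intro hp he
    rw [Walk.edges_cons, List.mem_cons] at he
    rcases he with he | he
    · rw [Sym2.eq_iff] at he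
      rcases he with ⟨-, rfl⟩ | ⟨rfl, -⟩
      · have : p' = Walk.nil :=
          Walk.isPath_iff_eq_nil.mp ((Walk.cons_isPath_iff _ _).mp hp).1
        simp [this]
      · exact (H.loopless.irrefl _ h).elim
    · exact absurd (Walk.fst_mem_support_of_mem_edges p' he)
        ((Walk.cons_isPath_iff _ _).mp hp).2

lemma lemB {a t : V} (P Q : H.Walk a t) (hP : P.IsPath) (hQ : Q.IsPath) (hat : a ≠ t)
    (hint : ∀ x, x ∈ P.support → x ∈ Q.support → x = a ∨ x = t)
    (hne : ¬(P.length = 1 ∧ Q.length = 1)) :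
    (P.append Q.reverse).IsCycle := by
  rw [Walk.isCycle_def]
  refine ⟨⟨?_⟩, ?_, ?_⟩
  · -- edges nodup
    rw [Walk.edges_append, List.nodup_append]
    refine ⟨hP.isTrail.edges_nodup, hQ.reverse.isTrail.edges_nodup, ?_⟩
    intro e heP e' heQ hee
    subst hee
    rw [Walk.edges_reverse, List.mem_reverse] at heQ
    induction e with
    | h u v =>
      have hadj : H.Adj u v := P.adj_of_mem_edges heP
      have hu : u = a ∨ u = t := hint u (P.fst_mem_support_of_mem_edges heP)
        (Q.fst_mem_support_of_mem_edges heQ)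
      have hv : v = a ∨ v = t := hint v (P.snd_mem_support_of_mem_edges heP)
        (Q.snd_mem_support_of_mem_edges heQ)
      have heat : s(u, v) = s(a, t) := by
        rcases hu with rfl | rfl <;> rcases hv with rfl | rfl
        · exact (hadj.ne rfl).elim
        · rfl
        · exact Sym2.eq_swap
        · exact (hadj.ne rfl).elim
      rw [heat] at heP heQ
      exact hne ⟨lemC P hP heP, lemC Q hQ heQ⟩
  · -- not nil
    intro hnil
    have h0 : (P.append Q.reverse).length = 0 := by rw [hnil]; rfl
    rw [Walk.length_append] at h0
    exact hat (Walk.eq_of_length_eq_zero (by omega : P.length = 0))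
  · -- support tail nodup
    have hsup : (P.append Q.reverse).support.tail
        = P.support.tail ++ Q.reverse.support.tail := by
      rw [Walk.support_append, Walk.support_eq_cons P, List.cons_append, List.tail_cons]
      rfl
    rw [hsup, List.nodup_append]
    refine ⟨hP.support_nodup.tail, hQ.reverse.support_nodup.tail, ?_⟩
    intro x hxP y hxQ hxy
    subst hxy
    have hxP' : x ∈ P.support := by rw [Walk.support_eq_cons P]; exact List.mem_cons_of_mem _ hxP
    have hxQ' : x ∈ Q.support := by
      have := List.mem_of_mem_tail hxQ
      rwa [Walk.support_reverse, List.mem_reverse] at this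
    rcases hint x hxP' hxQ' with rfl | rfl
    · have h2 := hP.support_nodup
      rw [Walk.support_eq_cons P, List.nodup_cons] at h2
      exact h2.1 hxP
    · have h2 := hQ.reverse.support_nodup
      rw [Walk.support_eq_cons Q.reverse, List.nodup_cons] at h2
      exact h2.1 hxQ

end Aux

/-- If `G - z` contains no even `A`-cycle, then every vertex `a ∈ A` lying in a block `B`
of `G - z` has at most two neighbours in `B`. -/
theorem A_vertex_in_block_few_neighbours {V : Type*} (G : SimpleGraph V) (A : Set V) (z : V)
    (hno : ¬ ∃ (v : V) (c : (deleteVertex G z).Walk v v),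
      c.IsCycle ∧ Even c.length ∧ ∃ a ∈ A, a ∈ c.support)
    (B : Set V) (hB : IsBlock (deleteVertex G z) B)
    (a : V) (haA : a ∈ A) (haB : a ∈ B) :
    {b ∈ B | (deleteVertex G z).Adj a b}.ncard ≤ 2 := by
  classical
  set H := deleteVertex G z with hH
  by_contra hlt
  push_neg at hlt
  set S := {b ∈ B | H.Adj a b} with hS
  -- S is finite with at least 3 elements; extract b1 b2 b3
  have hfin : S.Finite := by
    by_contra hinf
    have h0 : S.ncard = 0 := Set.Infinite.ncard hinf
    omega
  obtain ⟨b1, hb1⟩ := Set.nonempty_of_ncard_ne_zero (s := S) (by omega)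
  have h1 : (S \ {b1}).ncard = S.ncard - 1 := Set.ncard_diff_singleton_of_mem hb1
  obtain ⟨b2, hb2⟩ : (S \ {b1}).Nonempty := Set.nonempty_of_ncard_ne_zero (by omega)
  have h2 : ((S \ {b1}) \ {b2}).ncard = S.ncard - 2 := by
    rw [Set.ncard_diff_singleton_of_mem hb2, h1]
    omega
  obtain ⟨b3, hb3⟩ : ((S \ {b1}) \ {b2}).Nonempty := Set.nonempty_of_ncard_ne_zero (by omega)
  obtain ⟨hb3', hb32⟩ := hb3
  obtain ⟨hb3S, hb31⟩ := hb3'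
  obtain ⟨hb2S, hb21⟩ := hb2
  have hne12 : b1 ≠ b2 := fun h => hb21 (by simp [h.symm])
  have hne13 : b1 ≠ b3 := fun h => hb31 (by simp [h.symm])
  have hne23 : b2 ≠ b3 := fun h => hb32 (by simp [h.symm])
  have hadj1 : H.Adj a b1 := hb1.2
  have hadj2 : H.Adj a b2 := hb2S.2
  have hadj3 : H.Adj a b3 := hb3S.2
  -- the b_i lie in B \ {a}
  have hmem : ∀ b, b ∈ S → b ∈ B \ {a} := fun b hb =>
    ⟨hb.1, fun h => H.loopless.irrefl a (h ▸ hb.2)⟩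
  have hm1 := hmem b1 hb1
  have hm2 := hmem b2 hb2S
  have hm3 := hmem b3 hb3S
  -- get paths in H from b1 to b2 and b1 to b3 avoiding a
  have hpre := hB.2.1 a haB
  have getPath : ∀ (x y : V) (hx : x ∈ B \ {a}) (hy : y ∈ B \ {a}),
      ∃ p : H.Walk x y, p.IsPath ∧ ∀ w ∈ p.support, w ∈ B \ {a} := by
    intro x y hx hy
    obtain ⟨p0⟩ := hpre ⟨x, hx⟩ ⟨y, hy⟩
    obtain ⟨p1, hp1⟩ := p0.toPath
    refine ⟨p1.map (inclHom H _),
      Walk.map_isPath_of_injective (inclHom_inj _) hp1, ?_⟩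
    intro w hw
    change w ∈ (p1.map (inclHom H _)).support at hw
    rw [Walk.support_map] at hw
    obtain ⟨y', _, rfl⟩ := List.mem_map.mp hw
    exact y'.2
  obtain ⟨P12, hP12, hP12s⟩ := getPath b1 b2 hm1 hm2
  obtain ⟨P13, hP13, hP13s⟩ := getPath b1 b3 hm1 hm3
  -- extract t and the prefix r from b2 towards P13
  obtain ⟨t, r, hrP, hrsub, htq, hrq⟩ := lemA P12.reverse P13 hP12.reverse
  have hrsub' : ∀ x ∈ r.support, x ∈ B \ {a} := by
    intro x hx
    have := hrsub x hx
    rw [Walk.support_reverse, List.mem_reverse] at this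
    exact hP12s x this
  have htB : t ∈ B \ {a} := hP13s t htq
  have hta : t ≠ a := htB.2
  -- split P13 at t
  set q1 := P13.takeUntil t htq with hq1
  set q2 := P13.dropUntil t htq with hq2
  have hq1P : q1.IsPath := hP13.takeUntil htq
  have hq2P : q2.IsPath := hP13.dropUntil htq
  have hq1sub : ∀ x ∈ q1.support, x ∈ P13.support := fun x hx =>
    P13.support_takeUntil_subset htq hx
  have hq2sub : ∀ x ∈ q2.support, x ∈ P13.support := fun x hx =>
    P13.support_dropUntil_subset htq hx
  -- q1 and q2 meet only in t
  have hq12 : ∀ x, x ∈ q1.support → x ∈ q2.support → x = t := by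
    intro x hx1 hx2
    by_contra hxt
    have hspec := P13.take_spec htq
    have hnd := hP13.support_nodup
    rw [← hspec, Walk.support_append, List.nodup_append] at hnd
    refine hnd.2.2 x hx1 x ?_ rfl
    rw [Walk.support_eq_cons q2, List.mem_cons] at hx2
    rcases hx2 with rfl | hx2
    · exact absurd rfl hxt
    · exact hx2
  -- the three walks from a to t
  have hanotin : ∀ (s : V → Prop), (∀ x, s x → x ∈ B \ {a}) → ¬ s a := by
    intro s hs hsa
    exact (hs a hsa).2 rfl
  have haq1 : a ∉ q1.support := fun h => (hP13s a (hq1sub a h)).2 rfl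
  have haq2 : a ∉ q2.support := fun h => (hP13s a (hq2sub a h)).2 rfl
  have har : a ∉ r.support := fun h => (hrsub' a h).2 rfl
  set W1 : H.Walk a t := Walk.cons hadj1 q1 with hW1
  set W2 : H.Walk a t := Walk.cons hadj2 r with hW2
  set W3 : H.Walk a t := Walk.cons hadj3 q2.reverse with hW3
  have hW1P : W1.IsPath := hq1P.cons haq1
  have hW2P : W2.IsPath := hrP.cons har
  have hW3P : W3.IsPath := hq2P.reverse.cons (by
    rw [Walk.support_reverse, List.mem_reverse]; exact haq2)
  -- length-1 characterizations
  have hlen1 : W1.length = 1 → b1 = t := by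
    intro h
    rw [hW1, Walk.length_cons] at h
    exact Walk.eq_of_length_eq_zero (p := q1) (by omega)
  have hlen2 : W2.length = 1 → b2 = t := by
    intro h
    rw [hW2, Walk.length_cons] at h
    exact Walk.eq_of_length_eq_zero (p := r) (by omega)
  have hlen3 : W3.length = 1 → b3 = t := by
    intro h
    rw [hW3, Walk.length_cons] at h
    exact Walk.eq_of_length_eq_zero (p := q2.reverse) (by omega)
  -- internal disjointness of pairs
  have hsupW1 : W1.support = a :: q1.support := Walk.support_cons _ _
  have hsupW2 : W2.support = a :: r.support := Walk.support_cons _ _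
  have hsupW3 : W3.support = a :: q2.reverse.support := Walk.support_cons _ _
  have D12 : ∀ x, x ∈ W1.support → x ∈ W2.support → x = a ∨ x = t := by
    intro x hx1 hx2
    rw [hsupW1, List.mem_cons] at hx1
    rw [hsupW2, List.mem_cons] at hx2
    rcases hx1 with rfl | hx1
    · exact Or.inl rfl
    rcases hx2 with rfl | hx2
    · exact Or.inl rfl
    by_contra hc
    push_neg at hc
    exact hrq x hx2 hc.2 (hq1sub x hx1)
  have D13 : ∀ x, x ∈ W1.support → x ∈ W3.support → x = a ∨ x = t := by
    intro x hx1 hx2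
    rw [hsupW1, List.mem_cons] at hx1
    rw [hsupW3, List.mem_cons, Walk.support_reverse, List.mem_reverse] at hx2
    rcases hx1 with rfl | hx1
    · exact Or.inl rfl
    rcases hx2 with rfl | hx2
    · exact Or.inl rfl
    exact Or.inr (hq12 x hx1 hx2)
  have D23 : ∀ x, x ∈ W2.support → x ∈ W3.support → x = a ∨ x = t := by
    intro x hx1 hx2
    rw [hsupW2, List.mem_cons] at hx1
    rw [hsupW3, List.mem_cons, Walk.support_reverse, List.mem_reverse] at hx2
    rcases hx1 with rfl | hx1
    · exact Or.inl rfl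
    rcases hx2 with rfl | hx2
    · exact Or.inl rfl
    by_contra hc
    push_neg at hc
    exact hrq x hx1 hc.2 (hq2sub x hx2)
  -- key: two internally disjoint same-parity a-t paths yield a contradiction
  have key : ∀ (P Q : H.Walk a t), P.IsPath → Q.IsPath →
      (∀ x, x ∈ P.support → x ∈ Q.support → x = a ∨ x = t) →
      ¬(P.length = 1 ∧ Q.length = 1) → (Even P.length ↔ Even Q.length) → False := by
    intro P Q hPp hQp hint hone hpar
    have hc : (P.append Q.reverse).IsCycle := lemB P Q hPp hQp (Ne.symm hta) hint hone
    refine hno ⟨a, P.append Q.reverse, hc, ?_, a, haA, (P.append Q.reverse).start_mem_support⟩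
    rw [Walk.length_append, Walk.length_reverse, Nat.even_add]
    exact hpar
  -- pigeonhole on parity
  by_cases e1 : Even W1.length <;> by_cases e2 : Even W2.length <;>
    by_cases e3 : Even W3.length
  · exact key W1 W2 hW1P hW2P D12 (fun h => hne12 ((hlen1 h.1).trans (hlen2 h.2).symm))
      (iff_of_true e1 e2)
  · exact key W1 W2 hW1P hW2P D12 (fun h => hne12 ((hlen1 h.1).trans (hlen2 h.2).symm))
      (iff_of_true e1 e2)
  · exact key W1 W3 hW1P hW3P D13 (fun h => hne13 ((hlen1 h.1).trans (hlen3 h.2).symm))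
      (iff_of_true e1 e3)
  · exact key W2 W3 hW2P hW3P D23 (fun h => hne23 ((hlen2 h.1).trans (hlen3 h.2).symm))
      (iff_of_false e2 e3)
  · exact key W2 W3 hW2P hW3P D23 (fun h => hne23 ((hlen2 h.1).trans (hlen3 h.2).symm))
      (iff_of_true e2 e3)
  · exact key W1 W3 hW1P hW3P D13 (fun h => hne13 ((hlen1 h.1).trans (hlen3 h.2).symm))
      (iff_of_false e1 e3)
  · exact key W1 W2 hW1P hW2P D12 (fun h => hne12 ((hlen1 h.1).trans (hlen2 h.2).symm))
      (iff_of_false e1 e2)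
  · exact key W1 W2 hW1P hW2P D12 (fun h => hne12 ((hlen1 h.1).trans (hlen2 h.2).symm))
      (iff_of_false e1 e2)
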